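/- Let U be a hollow and uniform right R-module and put M = U², U₁ = U × 0 and U₂ = 0 × U. Then M is lifting if and only if for any right R-module X, any homomorphism f : U₁ → X and any surjective homomorphism g : U₂ → X, either (i) there exists a homomorphism h : U₁ → U₂ with f = g ∘ h, or (ii) there exist a submodule K of ker g and an injective homomorphism h : U₁ → U₂/K such that g′ ∘ h = f, where g′ : U₂/K → X is the homomorphism induced by g (g′(u + K) = g(u)). -/

import Mathlib

/-- A submodule `N` of `M` is *small* (superfluous) in `M` if `N + X ≠ M`
for every proper submodule `X` of `M`. -/
def IsSmallSubmodule {R M : Type*} [Ring R] [AddCommGroup M] [Module R M]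
    (N : Submodule R M) : Prop :=
  ∀ X : Submodule R M, X ≠ ⊤ → N ⊔ X ≠ ⊤

/-- A nonzero module `M` is *hollow* if every proper submodule of `M` is small in `M`. -/
def IsHollowModule (R M : Type*) [Ring R] [AddCommGroup M] [Module R M] : Prop :=
  Nontrivial M ∧ ∀ N : Submodule R M, N ≠ ⊤ → IsSmallSubmodule N

/-- A submodule `N` of `M` is *essential* in `M` if `N ∩ X ≠ 0`
for every nonzero submodule `X` of `M`. -/
def IsEssentialSubmodule {R M : Type*} [Ring R] [AddCommGroup M] [Module R M]
    (N : Submodule R M) : Prop :=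
  ∀ X : Submodule R M, X ≠ ⊥ → N ⊓ X ≠ ⊥

/-- A nonzero module `M` is *uniform* if every nonzero submodule of `M` is essential in `M`. -/
def IsUniformModule (R M : Type*) [Ring R] [AddCommGroup M] [Module R M] : Prop :=
  Nontrivial M ∧ ∀ N : Submodule R M, N ≠ ⊥ → IsEssentialSubmodule N

/-- `X` is a direct summand of `M`. -/
def IsDirectSummand {R M : Type*} [Ring R] [AddCommGroup M] [Module R M]
    (X : Submodule R M) : Prop :=
  ∃ Y : Submodule R M, IsCompl X Y

/-- A module `M` is *lifting* if for every submodule `N` of `M` there is a direct summand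
`X` of `M` with `X ⊆ N` such that `N/X` is small in `M/X`. -/
def IsLiftingModule (R M : Type*) [Ring R] [AddCommGroup M] [Module R M] : Prop :=
  ∀ N : Submodule R M, ∃ X : Submodule R M,
    X ≤ N ∧ IsDirectSummand X ∧ IsSmallSubmodule (N.map X.mkQ)

/-- A module `M` is *extending* if for every submodule `N` of `M` there is a direct summand
`X` of `M` such that `N` is essential in `X`. -/
def IsExtendingModule (R M : Type*) [Ring R] [AddCommGroup M] [Module R M] : Prop :=
  ∀ N : Submodule R M, ∃ X : Submodule R M,
    IsDirectSummand X ∧ N ≤ X ∧ ∀ Y : Submodule R M, Y ≤ X → Y ≠ ⊥ → N ⊓ Y ≠ ⊥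

/-- A module is *uniserial* if its submodules are linearly ordered by inclusion. -/
def IsUniserialModule (R M : Type*) [Ring R] [AddCommGroup M] [Module R M] : Prop :=
  ∀ A B : Submodule R M, A ≤ B ∨ B ≤ A

/-- An internal finite direct sum decomposition `M = ⨁ᵢ Fᵢ`. -/
def IsInternalDirectSum {R M ι : Type*} [Ring R] [AddCommGroup M] [Module R M]
    (F : ι → Submodule R M) : Prop :=
  (⨆ i, F i) = ⊤ ∧ ∀ i, Disjoint (F i) (⨆ j ∈ ({i}ᶜ : Set ι), F j)

/-- A module `M` satisfies the *finite internal exchange property* if for any direct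
summand `X` of `M` and any finite direct sum decomposition `M = M₁ ⊕ ⋯ ⊕ Mₙ` there are
submodules `Mᵢ' ⊆ Mᵢ` with `M = X ⊕ M₁' ⊕ ⋯ ⊕ Mₙ'`. -/
def SatisfiesFIEP (R M : Type*) [Ring R] [AddCommGroup M] [Module R M] : Prop :=
  ∀ (X : Submodule R M), IsDirectSummand X →
    ∀ (n : ℕ) (Mi : Fin n → Submodule R M), IsInternalDirectSum Mi →
      ∃ Mi' : Fin n → Submodule R M, (∀ i, Mi' i ≤ Mi i) ∧
        IsInternalDirectSum (fun o : Option (Fin n) => o.elim X Mi')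

universe u

section AuxLemmas
variable {R M M₂ : Type*} [Ring R] [AddCommGroup M] [Module R M] [AddCommGroup M₂] [Module R M₂]

lemma sm_mono {S T : Submodule R M} (hST : S ≤ T) (hT : IsSmallSubmodule T) :
    IsSmallSubmodule S := by
  intro Y hY htop
  apply hT Y hY
  rw [eq_top_iff]
  calc (⊤ : Submodule R M) = S ⊔ Y := htop.symm
  _ ≤ T ⊔ Y := sup_le_sup_right hST Y

lemma sm_map {S : Submodule R M} (π : M →ₗ[R] M₂) (hπ : Function.Surjective π)
    (hS : IsSmallSubmodule S) : IsSmallSubmodule (S.map π) := by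
  intro Y hY htop
  have hcne : Y.comap π ≠ ⊤ := by
    intro h
    apply hY
    rw [eq_top_iff]
    intro y _
    obtain ⟨x, rfl⟩ := hπ y
    have hx : x ∈ Y.comap π := h ▸ Submodule.mem_top
    exact hx
  apply hS _ hcne
  rw [eq_top_iff]
  intro m _
  have hm : π m ∈ S.map π ⊔ Y := htop ▸ Submodule.mem_top
  obtain ⟨a, ha, b, hb, hab⟩ := Submodule.mem_sup.mp hm
  obtain ⟨s, hs, rfl⟩ := ha
  have hms : m - s ∈ Y.comap π := by
    rw [Submodule.mem_comap, map_sub]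
    have : π m - π s = b := by rw [← hab]; abel
    rw [this]; exact hb
  have : m = s + (m - s) := by abel
  rw [this]
  exact Submodule.add_mem_sup hs hms

lemma hol_surj (hM : IsHollowModule R M) (π : M →ₗ[R] M₂) (hπ : Function.Surjective π)
    (hnt : Nontrivial M₂) : IsHollowModule R M₂ := by
  refine ⟨hnt, fun Y hY => ?_⟩
  have h1 : Y.comap π ≠ ⊤ := by
    intro h
    apply hY
    rw [eq_top_iff]
    intro y _
    obtain ⟨x, rfl⟩ := hπ y
    have hx : x ∈ Y.comap π := h ▸ Submodule.mem_top
    exact hx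
  have h2 := sm_map π hπ (hM.2 _ h1)
  rwa [Submodule.map_comap_eq_self (by rw [LinearMap.range_eq_top.mpr hπ]; exact le_top)] at h2

lemma hol_equiv (e : M ≃ₗ[R] M₂) (hM : IsHollowModule R M) : IsHollowModule R M₂ := by
  obtain ⟨x, y, hxy⟩ := hM.1
  exact hol_surj hM (e : M →ₗ[R] M₂) e.surjective ⟨e x, e y, fun h => hxy (e.injective h)⟩

lemma hol_quot (hM : IsHollowModule R M) {K : Submodule R M} (hK : K ≠ ⊤) :
    IsHollowModule R (M ⧸ K) :=
  hol_surj hM K.mkQ K.mkQ_surjective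
    (Submodule.Quotient.nontrivial_iff.mpr (lt_top_iff_ne_top.mpr hK).ne)

lemma sm_sup {S T : Submodule R M} (hS : IsSmallSubmodule S) (hT : IsSmallSubmodule T) :
    IsSmallSubmodule (S ⊔ T) := by
  intro Y hY htop
  rw [sup_assoc] at htop
  by_cases hTY : T ⊔ Y = ⊤
  · exact hT Y hY hTY
  · exact hS _ hTY htop

lemma mem_fst'' {x : M × M₂} : x ∈ Submodule.fst R M M₂ ↔ x.2 = 0 := by
  simp [Submodule.fst]

lemma mem_snd'' {x : M × M₂} : x ∈ Submodule.snd R M M₂ ↔ x.1 = 0 := by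
  simp [Submodule.snd]

lemma sm_prod_left {A : Submodule R M} (hA : IsSmallSubmodule A) :
    IsSmallSubmodule (A.prod (⊥ : Submodule R M₂)) := by
  intro Y hY htop
  have hstep : ∀ u : M, ((u, 0) : M × M₂) ∈ Y := by
    have hsup : A ⊔ Y.comap (LinearMap.inl R M M₂) = ⊤ := by
      rw [eq_top_iff]
      intro u _
      have hu : ((u, 0) : M × M₂) ∈ A.prod ⊥ ⊔ Y := htop ▸ Submodule.mem_top
      obtain ⟨a, ha, y, hy, hay⟩ := Submodule.mem_sup.mp hu
      rw [Submodule.mem_prod] at ha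
      have ha2 : a.2 = 0 := ha.2
      have hY2 : u - a.1 ∈ Y.comap (LinearMap.inl R M M₂) := by
        rw [Submodule.mem_comap]
        have : LinearMap.inl R M M₂ (u - a.1) = (u, 0) - a := by
          simp [Prod.ext_iff, ha2]
        rw [this]
        have : ((u, 0) : M × M₂) - a = y := by rw [← hay]; abel
        rw [this]; exact hy
      have hu' : u = a.1 + (u - a.1) := by abel
      rw [hu']
      exact Submodule.add_mem_sup ha.1 hY2
    by_contra hne
    have hcne : Y.comap (LinearMap.inl R M M₂) ≠ ⊤ := by
      intro h
      apply hne
      intro u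
      have : u ∈ Y.comap (LinearMap.inl R M M₂) := h ▸ Submodule.mem_top
      simpa [Submodule.mem_comap] using this
    exact hA _ hcne hsup
  apply hY
  rw [eq_top_iff]
  rintro ⟨x1, x2⟩ _
  have hm : ((x1, x2) : M × M₂) ∈ A.prod ⊥ ⊔ Y := htop ▸ Submodule.mem_top
  obtain ⟨a, ha, y, hy, hay⟩ := Submodule.mem_sup.mp hm
  rw [Submodule.mem_prod] at ha
  have ha' : a = (a.1, 0) := by
    have := ha.2
    simp only [Submodule.mem_bot] at this
    simp [Prod.ext_iff, this]
  have : ((x1, x2) : M × M₂) = a + y := hay.symm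
  rw [this, ha']
  exact Y.add_mem (hstep a.1) hy

lemma sm_prod_right {B : Submodule R M₂} (hB : IsSmallSubmodule B) :
    IsSmallSubmodule ((⊥ : Submodule R M).prod B) := by
  intro Y hY htop
  have hstep : ∀ u : M₂, ((0, u) : M × M₂) ∈ Y := by
    have hsup : B ⊔ Y.comap (LinearMap.inr R M M₂) = ⊤ := by
      rw [eq_top_iff]
      intro u _
      have hu : ((0, u) : M × M₂) ∈ (⊥ : Submodule R M).prod B ⊔ Y := htop ▸ Submodule.mem_top
      obtain ⟨a, ha, y, hy, hay⟩ := Submodule.mem_sup.mp hu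
      rw [Submodule.mem_prod] at ha
      have ha1 : a.1 = 0 := ha.1
      have hY2 : u - a.2 ∈ Y.comap (LinearMap.inr R M M₂) := by
        rw [Submodule.mem_comap]
        have : LinearMap.inr R M M₂ (u - a.2) = (0, u) - a := by
          simp [Prod.ext_iff, ha1]
        rw [this]
        have : ((0, u) : M × M₂) - a = y := by rw [← hay]; abel
        rw [this]; exact hy
      have hu' : u = a.2 + (u - a.2) := by abel
      rw [hu']
      exact Submodule.add_mem_sup ha.2 hY2
    by_contra hne
    have hcne : Y.comap (LinearMap.inr R M M₂) ≠ ⊤ := by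
      intro h
      apply hne
      intro u
      have : u ∈ Y.comap (LinearMap.inr R M M₂) := h ▸ Submodule.mem_top
      simpa [Submodule.mem_comap] using this
    exact hB _ hcne hsup
  apply hY
  rw [eq_top_iff]
  rintro ⟨x1, x2⟩ _
  have hm : ((x1, x2) : M × M₂) ∈ (⊥ : Submodule R M).prod B ⊔ Y := htop ▸ Submodule.mem_top
  obtain ⟨a, ha, y, hy, hay⟩ := Submodule.mem_sup.mp hm
  rw [Submodule.mem_prod] at ha
  have ha' : a = (0, a.2) := by
    have := ha.1
    simp only [Submodule.mem_bot] at this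
    simp [Prod.ext_iff, this]
  have : ((x1, x2) : M × M₂) = a + y := hay.symm
  rw [this, ha']
  exact Y.add_mem (hstep a.2) hy

lemma compl_map (e : M ≃ₗ[R] M₂) {A B : Submodule R M} (h : IsCompl A B) :
    IsCompl (A.map (e : M →ₗ[R] M₂)) (B.map (e : M →ₗ[R] M₂)) := by
  constructor
  · rw [Submodule.disjoint_def]
    rintro x ⟨a, ha, rfl⟩ ⟨b, hb, hba⟩
    have hab : b = a := e.injective hba
    subst hab
    have : b = 0 := Submodule.disjoint_def.mp h.disjoint b ha hb
    rw [this, map_zero]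
  · rw [codisjoint_iff, ← Submodule.map_sup, codisjoint_iff.mp h.codisjoint,
      Submodule.map_top, LinearEquiv.range]

lemma master {Q : Type*} [AddCommGroup Q] [Module R Q]
    (hQ : IsHollowModule R Q) (φ : M →ₗ[R] Q) (c : M₂ →ₗ[R] M)
    (hbij : Function.Bijective (φ ∘ₗ c)) {N : Submodule R M}
    (hker : LinearMap.ker φ ≤ N) (hN : N ≠ ⊤) :
    ∃ X : Submodule R M, X ≤ N ∧ IsDirectSummand X ∧ IsSmallSubmodule (N.map X.mkQ) := by
  have hφsurj : Function.Surjective φ := by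
    intro q
    obtain ⟨v, hv⟩ := hbij.2 q
    exact ⟨c v, hv⟩
  have hcompl : IsCompl (LinearMap.ker φ) (LinearMap.range c) := by
    constructor
    · rw [Submodule.disjoint_def]
      rintro x hx ⟨v, rfl⟩
      have : (φ ∘ₗ c) v = (φ ∘ₗ c) 0 := by
        rw [map_zero]
        exact hx
      rw [hbij.1 this, map_zero]
    · rw [codisjoint_iff, eq_top_iff]
      intro m _
      set e := LinearEquiv.ofBijective (φ ∘ₗ c) hbij with he
      set v := e.symm (φ m) with hv
      have hcv : φ (c v) = φ m := by
        have h1 : (φ ∘ₗ c) v = e v := rfl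
        have h2 : e v = φ m := e.apply_symm_apply (φ m)
        rw [← h1] at h2
        exact h2
      have hmem : m - c v ∈ LinearMap.ker φ := by
        rw [LinearMap.mem_ker, map_sub, hcv, sub_self]
      have : m = (m - c v) + c v := by abel
      rw [this]
      exact Submodule.add_mem_sup hmem ⟨v, rfl⟩
  refine ⟨LinearMap.ker φ, hker, ⟨LinearMap.range c, hcompl⟩, ?_⟩
  have hNmap : N.map (LinearMap.ker φ).mkQ ≠ ⊤ := by
    intro h
    apply hN
    rw [eq_top_iff]
    intro m _
    have hm : (LinearMap.ker φ).mkQ m ∈ N.map (LinearMap.ker φ).mkQ := h ▸ Submodule.mem_top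
    obtain ⟨n, hn, hnm⟩ := hm
    have : n - m ∈ LinearMap.ker φ := by
      rw [← Submodule.Quotient.eq]
      simpa [Submodule.mkQ_apply] using hnm
    have hmn : m = n - (n - m) := by abel
    rw [hmn]
    exact N.sub_mem hn (hker this)
  have hhol : IsHollowModule R (M ⧸ LinearMap.ker φ) :=
    hol_equiv (φ.quotKerEquivOfSurjective hφsurj).symm hQ
  exact hhol.2 _ hNmap

end AuxLemmas

def PCond (R : Type*) (U : Type u) [Ring R] [AddCommGroup U] [Module R U] : Prop :=
  ∀ (X : Type u) [AddCommGroup X] [Module R X] (f g : U →ₗ[R] X),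
    Function.Surjective g →
      (∃ h : U →ₗ[R] U, f = g ∘ₗ h) ∨
      (∃ (K : Submodule R U) (hK : K ≤ LinearMap.ker g) (h : U →ₗ[R] U ⧸ K),
        Function.Injective h ∧ (K.liftQ g hK) ∘ₗ h = f)

section CoreSection
variable {R : Type*} {U : Type u} [Ring R] [AddCommGroup U] [Module R U]

lemma core (hH : IsHollowModule R U) (hP : PCond R U) (N : Submodule R (U × U))
    (hN : N ≠ ⊤) (hsup : N ⊔ Submodule.snd R U U = ⊤) :
    ∃ X : Submodule R (U × U), X ≤ N ∧ IsDirectSummand X ∧ IsSmallSubmodule (N.map X.mkQ) := by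
  set q : (U × U) →ₗ[R] (U × U) ⧸ N := N.mkQ with hqdef
  set f₀ : U →ₗ[R] (U × U) ⧸ N := q ∘ₗ LinearMap.inl R U U with hf₀
  set g₀ : U →ₗ[R] (U × U) ⧸ N := q ∘ₗ LinearMap.inr R U U with hg₀
  have memN : ∀ m : U × U, q m = 0 ↔ m ∈ N := by
    intro m
    rw [hqdef, Submodule.mkQ_apply, Submodule.Quotient.mk_eq_zero]
  have hq : ∀ a b : U, f₀ a + g₀ b = q (a, b) := by
    intro a b
    have h1 : ((a, b) : U × U) = (a, 0) + (0, b) := by simp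
    rw [h1, map_add]
    rfl
  have hg₀s : Function.Surjective g₀ := by
    intro x
    obtain ⟨m, rfl⟩ := Submodule.Quotient.mk_surjective N x
    have hm : m ∈ N ⊔ Submodule.snd R U U := hsup ▸ Submodule.mem_top
    obtain ⟨n, hn, s, hs, hns⟩ := Submodule.mem_sup.mp hm
    refine ⟨s.2, ?_⟩
    have hs1 : s.1 = 0 := mem_snd''.mp hs
    have h2 : ((0 : U), s.2) = s := by
      simp [Prod.ext_iff, hs1]
    show q (0, s.2) = Submodule.Quotient.mk m
    rw [h2]
    have h3 : q s = q (n + s) := by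
      rw [map_add, (memN n).mpr hn, zero_add]
    rw [h3, hns]
    rfl
  -- the branch when f₀ lifts through g₀
  have liftCase : (∃ h : U →ₗ[R] U, f₀ = g₀ ∘ₗ h) →
      ∃ X : Submodule R (U × U), X ≤ N ∧ IsDirectSummand X ∧ IsSmallSubmodule (N.map X.mkQ) := by
    rintro ⟨h, hh⟩
    set φ : (U × U) →ₗ[R] U := LinearMap.snd R U U + h ∘ₗ LinearMap.fst R U U with hφ
    have hcomp : φ ∘ₗ LinearMap.inr R U U = LinearMap.id := by
      ext v
      simp [hφ]
    refine master hH φ (LinearMap.inr R U U) ?_ ?_ hN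
    · rw [hcomp]
      exact Function.bijective_id
    · rintro ⟨a, b⟩ hm
      rw [LinearMap.mem_ker] at hm
      have hab : b + h a = 0 := hm
      have hb : b = - h a := (neg_eq_of_add_eq_zero_left hab).symm
      rw [← memN, ← hq]
      have h1 : f₀ a = g₀ (h a) := by rw [hh]; rfl
      rw [h1, hb, map_neg, add_neg_cancel]
  -- the branch with a bijective "witness"
  have bijCase : ∀ (K : Submodule R U) (hK : K ≤ LinearMap.ker g₀) (hs : U →ₗ[R] U ⧸ K)
      (c : U →ₗ[R] U × U), K ≠ ⊤ →
      Function.Bijective ((hs ∘ₗ LinearMap.fst R U U + K.mkQ ∘ₗ LinearMap.snd R U U) ∘ₗ c) →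
      (K.liftQ g₀ hK) ∘ₗ hs = f₀ →
      ∃ X : Submodule R (U × U), X ≤ N ∧ IsDirectSummand X ∧ IsSmallSubmodule (N.map X.mkQ) := by
    intro K hK hs c hKne hbij hlift
    refine master (hol_quot hH hKne) _ c hbij ?_ hN
    rintro ⟨a, b⟩ hm
    rw [LinearMap.mem_ker] at hm
    have hm' : hs a + K.mkQ b = 0 := hm
    rw [← memN, ← hq]
    have h1 : f₀ a = K.liftQ g₀ hK (hs a) := by rw [← hlift]; rfl
    have h2 : g₀ b = K.liftQ g₀ hK (K.mkQ b) := by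
      rw [Submodule.mkQ_apply, Submodule.liftQ_apply]
    rw [h1, h2, ← map_add, hm', map_zero]
  -- helper: K ≠ ⊤ from injectivity of a map U → U ⧸ K
  have Kne : ∀ (K : Submodule R U) (h : U →ₗ[R] U ⧸ K), Function.Injective h → K ≠ ⊤ := by
    intro K h hinj hKtop
    obtain ⟨x, y, hxy⟩ := hH.1
    apply hxy
    apply hinj
    have hsub : Subsingleton (U ⧸ K) := by
      rw [hKtop]
      infer_instance
    exact Subsingleton.elim _ _
  -- helper : ker of the induced map is proper
  have kerne : ∀ (K : Submodule R U) (hK : K ≤ LinearMap.ker g₀),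
      LinearMap.ker (K.liftQ g₀ hK) ≠ ⊤ := by
    intro K hK hker
    apply hN
    rw [eq_top_iff]
    intro m _
    rw [← memN]
    obtain ⟨v, hv⟩ := hg₀s (q m)
    have hg0 : g₀ v = 0 := by
      have h1 : K.mkQ v ∈ LinearMap.ker (K.liftQ g₀ hK) := hker ▸ Submodule.mem_top
      rw [LinearMap.mem_ker] at h1
      have h2 : (K.liftQ g₀ hK) (K.mkQ v) = g₀ v := by
        rw [← LinearMap.comp_apply, Submodule.liftQ_mkQ]
      rw [← h2]
      exact h1
    rw [hg0] at hv
    exact hv.symm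
  -- helper: from surjectivity of a lifted map, the witness is surjective
  have rngtop : ∀ (K : Submodule R U) (hK : K ≤ LinearMap.ker g₀) (h : U →ₗ[R] U ⧸ K),
      Function.Injective h → Function.Surjective ((K.liftQ g₀ hK) ∘ₗ h) →
      LinearMap.range h = ⊤ := by
    intro K hK h hinj hsurj
    by_contra hrne
    have hKne : K ≠ ⊤ := Kne K h hinj
    have hsup2 : LinearMap.range h ⊔ LinearMap.ker (K.liftQ g₀ hK) = ⊤ := by
      rw [eq_top_iff]
      intro x _
      obtain ⟨u, hu⟩ := hsurj (K.liftQ g₀ hK x)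
      have hxu : x - h u ∈ LinearMap.ker (K.liftQ g₀ hK) := by
        rw [LinearMap.mem_ker, map_sub,
          show (K.liftQ g₀ hK) (h u) = (K.liftQ g₀ hK) x from hu, sub_self]
      have hx : x = h u + (x - h u) := by abel
      rw [hx]
      exact Submodule.add_mem_sup ⟨u, rfl⟩ hxu
    exact (hol_quot hH hKne).2 _ hrne _ (kerne K hK) hsup2
  rcases hP ((U × U) ⧸ N) f₀ g₀ hg₀s with hcase | ⟨K, hK, h, hinj, hlift⟩
  · exact liftCase hcase
  by_cases hsupf : N ⊔ Submodule.fst R U U = ⊤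
  · -- f₀ is surjective, hence h is bijective
    have hf₀s : Function.Surjective f₀ := by
      intro x
      obtain ⟨m, rfl⟩ := Submodule.Quotient.mk_surjective N x
      have hm : m ∈ N ⊔ Submodule.fst R U U := hsupf ▸ Submodule.mem_top
      obtain ⟨n, hn, s, hs, hns⟩ := Submodule.mem_sup.mp hm
      refine ⟨s.1, ?_⟩
      have hs2 : s.2 = 0 := mem_fst''.mp hs
      have h2 : (s.1, (0 : U)) = s := by
        simp [Prod.ext_iff, hs2]
      show q (s.1, 0) = Submodule.Quotient.mk m
      rw [h2]
      have h3 : q s = q (n + s) := by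
        rw [map_add, (memN n).mpr hn, zero_add]
      rw [h3, hns]
      rfl
    have hfs' : Function.Surjective ((K.liftQ g₀ hK) ∘ₗ h) := by
      rw [hlift]
      exact hf₀s
    have hbijh : Function.Bijective h :=
      ⟨hinj, LinearMap.range_eq_top.mp (rngtop K hK h hinj hfs')⟩
    apply bijCase K hK h (LinearMap.inl R U U) (Kne K h hinj) ?_ hlift
    have hcomp : (h ∘ₗ LinearMap.fst R U U + K.mkQ ∘ₗ LinearMap.snd R U U) ∘ₗ
        LinearMap.inl R U U = h := by
      ext u
      simp
    rw [hcomp]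
    exact hbijh
  · -- f₀ is not surjective
    have hf₀ne : LinearMap.range f₀ ≠ ⊤ := by
      intro hr
      apply hsupf
      rw [eq_top_iff]
      intro m _
      have : q m ∈ LinearMap.range f₀ := hr ▸ Submodule.mem_top
      obtain ⟨a, ha⟩ := this
      have hmn : m - (a, 0) ∈ N := by
        rw [← memN, map_sub]
        have h4 : q (a, 0) = q m := ha
        rw [h4, sub_self]
      have hm : m = (m - (a, 0)) + (a, 0) := by abel
      rw [hm]
      exact Submodule.add_mem_sup hmn (mem_fst''.mpr rfl)
    have hXt : IsHollowModule R ((U × U) ⧸ N) :=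
      hol_surj hH g₀ hg₀s
        (Submodule.Quotient.nontrivial_iff.mpr (lt_top_iff_ne_top.mpr hN).ne)
    rcases hP ((U × U) ⧸ N) (f₀ + g₀) g₀ hg₀s with ⟨w, hw⟩ | ⟨K2, hK2, h2, hinj2, hlift2⟩
    · apply liftCase
      refine ⟨w - LinearMap.id, ?_⟩
      ext u
      have hwu : (f₀ + g₀) u = g₀ (w u) := by rw [hw]; rfl
      have : f₀ u + g₀ u = g₀ (w u) := hwu
      simp only [LinearMap.comp_apply, LinearMap.sub_apply, LinearMap.id_apply, map_sub]
      rw [← this]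
      abel
    · have hfhat : Function.Surjective (f₀ + g₀) := by
        have hsup3 : LinearMap.range (f₀ + g₀) ⊔ LinearMap.range f₀ = ⊤ := by
          rw [eq_top_iff]
          intro x _
          obtain ⟨v, hv⟩ := hg₀s x
          have hx : x = (f₀ + g₀) v + (-(f₀ v)) := by
            rw [← hv, LinearMap.add_apply]
            abel
          rw [hx]
          exact Submodule.add_mem_sup ⟨v, rfl⟩ (Submodule.neg_mem _ ⟨v, rfl⟩)
        by_contra hne
        rw [← LinearMap.range_eq_top] at hne
        exact hXt.2 _ hne _ hf₀ne hsup3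
      have hfs' : Function.Surjective ((K2.liftQ g₀ hK2) ∘ₗ h2) := by
        rw [hlift2]
        exact hfhat
      have hbij2 : Function.Bijective h2 :=
        ⟨hinj2, LinearMap.range_eq_top.mp (rngtop K2 hK2 h2 hinj2 hfs')⟩
      apply bijCase K2 hK2 (h2 - K2.mkQ) (LinearMap.prod LinearMap.id LinearMap.id)
        (Kne K2 h2 hinj2) ?_ ?_
      · have hcomp : ((h2 - K2.mkQ) ∘ₗ LinearMap.fst R U U + K2.mkQ ∘ₗ LinearMap.snd R U U) ∘ₗ
            (LinearMap.prod LinearMap.id LinearMap.id) = h2 := by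
          ext u
          simp
        rw [hcomp]
        exact hbij2
      · ext u
        have h1 : (K2.liftQ g₀ hK2) (h2 u) = (f₀ + g₀) u := by
          rw [← hlift2]; rfl
        simp only [LinearMap.comp_apply, LinearMap.sub_apply, map_sub]
        rw [h1, Submodule.mkQ_apply, Submodule.liftQ_apply]
        simp

lemma lifting_of_P (hH : IsHollowModule R U) (hP : PCond R U) :
    IsLiftingModule R (U × U) := by
  intro N
  by_cases hN : N = ⊤
  · refine ⟨⊤, le_of_eq hN.symm, ⟨⊥, isCompl_top_bot⟩, ?_⟩
    intro Y hY _
    apply hY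
    rw [eq_top_iff]
    rintro z _
    obtain ⟨m, rfl⟩ := Submodule.Quotient.mk_surjective _ z
    have hz : Submodule.Quotient.mk m = (0 : (U × U) ⧸ (⊤ : Submodule R (U × U))) :=
      (Submodule.Quotient.mk_eq_zero _).mpr Submodule.mem_top
    rw [hz]
    exact Y.zero_mem
  by_cases hs2 : N ⊔ Submodule.snd R U U = ⊤
  · exact core hH hP N hN hs2
  by_cases hs1 : N ⊔ Submodule.fst R U U = ⊤
  · -- mirrored case via the swap
    set σ : (U × U) ≃ₗ[R] (U × U) := LinearEquiv.prodComm R U U with hσ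
    set N' : Submodule R (U × U) := N.map (σ : (U × U) →ₗ[R] (U × U)) with hN'def
    have hfs : (Submodule.fst R U U).map (σ : (U × U) →ₗ[R] (U × U)) = Submodule.snd R U U := by
      ext x
      constructor
      · rintro ⟨y, hy, rfl⟩
        rw [mem_snd'']
        have : y.2 = 0 := mem_fst''.mp hy
        simpa [hσ] using this
      · intro hx
        apply Submodule.mem_map.mpr
        exact ⟨(x.2, x.1), mem_fst''.mpr (mem_snd''.mp hx), by simp [hσ]⟩
    have hN's : N' ⊔ Submodule.snd R U U = ⊤ := by
      rw [← hfs, hN'def, ← Submodule.map_sup, hs1, Submodule.map_top, LinearEquiv.range]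
    have hN'ne : N' ≠ ⊤ := by
      intro h
      apply hN
      rw [eq_top_iff]
      intro m _
      have hm : σ m ∈ N' := h ▸ Submodule.mem_top
      obtain ⟨n, hn, hnm⟩ := hm
      have : n = m := σ.injective hnm
      exact this ▸ hn
    obtain ⟨X, hXN', ⟨C, hC⟩, hsm⟩ := core hH hP N' hN'ne hN's
    set X' : Submodule R (U × U) := X.map (σ.symm : (U × U) →ₗ[R] (U × U)) with hX'def
    have hX'N : X' ≤ N := by
      rintro x ⟨y, hy, rfl⟩
      obtain ⟨n, hn, rfl⟩ := hXN' hy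
      simpa using hn
    refine ⟨X', hX'N, ⟨C.map (σ.symm : (U × U) →ₗ[R] (U × U)), compl_map σ.symm hC⟩, ?_⟩
    have hkerle : X ≤ LinearMap.ker (X'.mkQ ∘ₗ (σ.symm : (U × U) →ₗ[R] (U × U))) := by
      intro x hx
      rw [LinearMap.mem_ker, LinearMap.comp_apply, Submodule.mkQ_apply,
        Submodule.Quotient.mk_eq_zero]
      exact ⟨x, hx, rfl⟩
    set ρ : ((U × U) ⧸ X) →ₗ[R] ((U × U) ⧸ X') :=
      X.liftQ (X'.mkQ ∘ₗ (σ.symm : (U × U) →ₗ[R] (U × U))) hkerle with hρdef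
    have hρmk : ∀ m : U × U, ρ (X.mkQ m) = X'.mkQ (σ.symm m) := by
      intro m
      rw [hρdef, Submodule.mkQ_apply, Submodule.liftQ_apply]
      rfl
    have hρs : Function.Surjective ρ := by
      intro z
      obtain ⟨m, rfl⟩ := Submodule.Quotient.mk_surjective _ z
      refine ⟨X.mkQ (σ m), ?_⟩
      rw [hρmk]
      simp
    have hEq : N.map X'.mkQ = (N'.map X.mkQ).map ρ := by
      ext z
      constructor
      · rintro ⟨n, hn, rfl⟩
        refine ⟨X.mkQ (σ n), ⟨σ n, ⟨n, hn, rfl⟩, rfl⟩, ?_⟩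
        rw [hρmk]
        simp
      · rintro ⟨y, ⟨n', hn', rfl⟩, rfl⟩
        obtain ⟨n, hn, rfl⟩ := hn'
        refine ⟨n, hn, ?_⟩
        rw [hρmk]
        simp
    rw [hEq]
    exact sm_map ρ hρs hsm
  · -- both projections proper: N is small
    have hA : N.map (LinearMap.fst R U U) ≠ ⊤ := by
      intro h
      apply hs2
      rw [eq_top_iff]
      rintro ⟨a, b⟩ _
      have ha : a ∈ N.map (LinearMap.fst R U U) := h ▸ Submodule.mem_top
      obtain ⟨⟨x, y⟩, hxy, hax⟩ := ha
      have hax' : x = a := hax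
      have hsnd : ((0 : U), b - y) ∈ Submodule.snd R U U := mem_snd''.mpr rfl
      have heq : ((a, b) : U × U) = (x, y) + (0, b - y) := by
        simp [Prod.ext_iff, hax'.symm]
      rw [heq]
      exact Submodule.add_mem_sup hxy hsnd
    have hB : N.map (LinearMap.snd R U U) ≠ ⊤ := by
      intro h
      apply hs1
      rw [eq_top_iff]
      rintro ⟨a, b⟩ _
      have hb : b ∈ N.map (LinearMap.snd R U U) := h ▸ Submodule.mem_top
      obtain ⟨⟨x, y⟩, hxy, hby⟩ := hb
      have hby' : y = b := hby
      have hfst : ((a - x, 0) : U × U) ∈ Submodule.fst R U U := mem_fst''.mpr rfl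
      have heq : ((a, b) : U × U) = (x, y) + (a - x, 0) := by
        simp [Prod.ext_iff, hby'.symm]
      rw [heq]
      exact Submodule.add_mem_sup hxy hfst
    have hNle : N ≤ ((N.map (LinearMap.fst R U U)).prod (⊥ : Submodule R U)) ⊔
        ((⊥ : Submodule R U).prod (N.map (LinearMap.snd R U U))) := by
      rintro ⟨a, b⟩ hab
      have h1 : ((a, 0) : U × U) ∈ (N.map (LinearMap.fst R U U)).prod (⊥ : Submodule R U) := by
        rw [Submodule.mem_prod]
        exact ⟨⟨(a, b), hab, rfl⟩, rfl⟩
      have h2 : ((0, b) : U × U) ∈ (⊥ : Submodule R U).prod (N.map (LinearMap.snd R U U)) := by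
        rw [Submodule.mem_prod]
        exact ⟨rfl, ⟨(a, b), hab, rfl⟩⟩
      have heq : ((a, b) : U × U) = (a, 0) + (0, b) := by simp
      rw [heq]
      exact Submodule.add_mem_sup h1 h2
    have hNsmall : IsSmallSubmodule N :=
      sm_mono hNle (sm_sup (sm_prod_left (hH.2 _ hA)) (sm_prod_right (hH.2 _ hB)))
    exact ⟨⊥, bot_le, ⟨⊤, isCompl_bot_top⟩,
      sm_map _ (Submodule.mkQ_surjective _) hNsmall⟩

lemma ess_prod (hU : IsUniformModule R U) {D : Submodule R (U × U)}
    (hA : D.comap (LinearMap.inl R U U) ≠ ⊥) (hB : D.comap (LinearMap.inr R U U) ≠ ⊥)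
    {W : Submodule R (U × U)} (hW : W ≠ ⊥) : D ⊓ W ≠ ⊥ := by
  obtain ⟨⟨x, y⟩, hmW, hne⟩ := Submodule.exists_mem_ne_zero_of_ne_bot hW
  by_cases hy : y = 0
  · have hx : x ≠ 0 := by
      rintro rfl
      exact hne (by simp [hy])
    have h1 : W.comap (LinearMap.inl R U U) ≠ ⊥ := by
      intro h
      have hx' : x ∈ W.comap (LinearMap.inl R U U) := by
        rw [Submodule.mem_comap]
        have : (LinearMap.inl R U U) x = ((x, y) : U × U) := by simp [Prod.ext_iff, hy]
        rw [this]
        exact hmW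
      rw [h, Submodule.mem_bot] at hx'
      exact hx hx'
    have h2 := hU.2 _ hA _ h1
    obtain ⟨a, haa, hane⟩ := Submodule.exists_mem_ne_zero_of_ne_bot h2
    rw [Submodule.mem_inf] at haa
    intro hbot
    have hmem : (LinearMap.inl R U U) a ∈ D ⊓ W := ⟨haa.1, haa.2⟩
    rw [hbot, Submodule.mem_bot] at hmem
    apply hane
    have := congrArg Prod.fst hmem
    simpa using this
  · have hsp : Submodule.span R {y} ≠ ⊥ := by
      simpa [Submodule.span_singleton_eq_bot] using hy
    obtain ⟨v, hvv, hvne⟩ := Submodule.exists_mem_ne_zero_of_ne_bot (hU.2 _ hB _ hsp)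
    rw [Submodule.mem_inf] at hvv
    obtain ⟨r, rfl⟩ := Submodule.mem_span_singleton.mp hvv.2
    by_cases hrx : r • x = 0
    · intro hbot
      have hm : (r • (⟨x, y⟩ : U × U)) ∈ D ⊓ W := by
        constructor
        · have : r • (⟨x, y⟩ : U × U) = LinearMap.inr R U U (r • y) := by
            simp [Prod.ext_iff, hrx]
          rw [this]
          exact hvv.1
        · exact W.smul_mem r hmW
      rw [hbot, Submodule.mem_bot] at hm
      apply hvne
      have := congrArg Prod.snd hm
      simpa using this
    · have hsp2 : Submodule.span R {r • x} ≠ ⊥ := by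
        simpa [Submodule.span_singleton_eq_bot] using hrx
      obtain ⟨a, haa, hane⟩ := Submodule.exists_mem_ne_zero_of_ne_bot (hU.2 _ hA _ hsp2)
      rw [Submodule.mem_inf] at haa
      obtain ⟨s, hse⟩ := Submodule.mem_span_singleton.mp haa.2
      intro hbot
      have hD1 : (LinearMap.inl R U U) (s • (r • x)) ∈ D := by
        rw [hse]
        exact haa.1
      have hD2 : (LinearMap.inr R U U) (s • (r • y)) ∈ D := by
        have := D.smul_mem s hvv.1
        rwa [← map_smul] at this
      have hm : ((s • (r • (⟨x, y⟩ : U × U)))) ∈ D ⊓ W := by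
        constructor
        · have heq : s • (r • (⟨x, y⟩ : U × U)) =
              (LinearMap.inl R U U) (s • (r • x)) + (LinearMap.inr R U U) (s • (r • y)) := by
            simp [Prod.ext_iff]
          rw [heq]
          exact D.add_mem hD1 hD2
        · exact W.smul_mem s (W.smul_mem r hmW)
      rw [hbot, Submodule.mem_bot] at hm
      apply hane
      rw [← hse]
      have := congrArg Prod.fst hm
      simpa using this

lemma forward (hU : IsUniformModule R U) (hL : IsLiftingModule R (U × U))
    (X : Type u) [AddCommGroup X] [Module R X]
    (f : ↥(Submodule.fst R U U) →ₗ[R] X) (g : ↥(Submodule.snd R U U) →ₗ[R] X)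
    (hg : Function.Surjective g) :
    (∃ h : ↥(Submodule.fst R U U) →ₗ[R] ↥(Submodule.snd R U U), f = g ∘ₗ h) ∨
    (∃ (K : Submodule R ↥(Submodule.snd R U U)) (hK : K ≤ LinearMap.ker g)
        (h : ↥(Submodule.fst R U U) →ₗ[R] (↥(Submodule.snd R U U) ⧸ K)),
      Function.Injective h ∧ (K.liftQ g hK) ∘ₗ h = f) := by
  classical
  set ρ₁ : (U × U) →ₗ[R] ↥(Submodule.fst R U U) :=
    LinearMap.codRestrict (Submodule.fst R U U)
      (LinearMap.prod (LinearMap.fst R U U) 0)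
      (fun m => mem_fst''.mpr rfl) with hρ₁
  set ρ₂ : (U × U) →ₗ[R] ↥(Submodule.snd R U U) :=
    LinearMap.codRestrict (Submodule.snd R U U)
      (LinearMap.prod 0 (LinearMap.snd R U U))
      (fun m => mem_snd''.mpr rfl) with hρ₂
  set F : (U × U) →ₗ[R] X := f ∘ₗ ρ₁ + g ∘ₗ ρ₂ with hFdef
  have hρ₁v : ∀ m : U × U, ((ρ₁ m : U × U)) = (m.1, 0) := fun m => rfl
  have hρ₂v : ∀ m : U × U, ((ρ₂ m : U × U)) = (0, m.2) := fun m => rfl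
  have hF : ∀ m : U × U, F m = f (ρ₁ m) + g (ρ₂ m) := fun m => rfl
  have hFfst : ∀ u : ↥(Submodule.fst R U U), F ↑u = f u := by
    intro u
    have hu2 : (u : U × U).2 = 0 := mem_fst''.mp u.2
    have h1 : ρ₁ ↑u = u := by
      apply Subtype.ext
      rw [hρ₁v]
      simp [Prod.ext_iff, hu2]
    have h2 : ρ₂ ↑u = 0 := by
      apply Subtype.ext
      rw [hρ₂v]
      simp [Prod.ext_iff, hu2]
    rw [hF, h1, h2, map_zero, add_zero]
  have hFsnd : ∀ v : ↥(Submodule.snd R U U), F ↑v = g v := by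
    intro v
    have hv1 : (v : U × U).1 = 0 := mem_snd''.mp v.2
    have h1 : ρ₂ ↑v = v := by
      apply Subtype.ext
      rw [hρ₂v]
      simp [Prod.ext_iff, hv1]
    have h2 : ρ₁ ↑v = 0 := by
      apply Subtype.ext
      rw [hρ₁v]
      simp [Prod.ext_iff, hv1]
    rw [hF, h1, h2, map_zero, zero_add]
  set N : Submodule R (U × U) := LinearMap.ker F with hNdef
  obtain ⟨D, hDN, ⟨C, hC⟩, hsm⟩ := hL N
  have hNs : N ⊔ Submodule.snd R U U = ⊤ := by
    rw [eq_top_iff]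
    rintro ⟨a, b⟩ _
    obtain ⟨v, hv⟩ := hg (f ⟨(a, 0), mem_fst''.mpr rfl⟩)
    have hv1 : (v : U × U).1 = 0 := mem_snd''.mp v.2
    have hn : ((a, -(v : U × U).2) : U × U) ∈ N := by
      rw [hNdef, LinearMap.mem_ker, hF]
      have e1 : ρ₁ ((a, -(v : U × U).2) : U × U) = ⟨(a, 0), mem_fst''.mpr rfl⟩ := by
        apply Subtype.ext
        rw [hρ₁v]
      have e2 : ρ₂ ((a, -(v : U × U).2) : U × U) = -v := by
        apply Subtype.ext
        rw [hρ₂v]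
        simp [Prod.ext_iff, hv1]
      rw [e1, e2, map_neg, hv]
      simp
    have hsnd : ((0, b + (v : U × U).2) : U × U) ∈ Submodule.snd R U U := mem_snd''.mpr rfl
    have heq : ((a, b) : U × U) = (a, -(v : U × U).2) + (0, b + (v : U × U).2) := by
      simp [Prod.ext_iff]
    rw [heq]
    exact Submodule.add_mem_sup hn hsnd
  have hDs : D ⊔ Submodule.snd R U U = ⊤ := by
    rw [← Submodule.map_mkQ_eq_top]
    by_contra hne
    apply hsm _ hne
    rw [← Submodule.map_sup, hNs, Submodule.map_top, Submodule.range_mkQ]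
  set K : Submodule R ↥(Submodule.snd R U U) :=
    D.comap (Submodule.snd R U U).subtype with hKdef
  have hKg : K ≤ LinearMap.ker g := by
    intro v hv
    rw [LinearMap.mem_ker, ← hFsnd v]
    have : (v : U × U) ∈ N := hDN hv
    rwa [hNdef, LinearMap.mem_ker] at this
  set θ : ↥(Submodule.snd R U U) →ₗ[R] (U × U) ⧸ D :=
    D.mkQ ∘ₗ (Submodule.snd R U U).subtype with hθdef
  have hθker : LinearMap.ker θ = K := by
    ext v
    rw [LinearMap.mem_ker, hθdef, LinearMap.comp_apply, Submodule.mkQ_apply,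
      Submodule.Quotient.mk_eq_zero, hKdef, Submodule.mem_comap]
  have hθsurj : Function.Surjective θ := by
    intro z
    obtain ⟨m, rfl⟩ := Submodule.Quotient.mk_surjective D z
    have hm : m ∈ D ⊔ Submodule.snd R U U := hDs ▸ Submodule.mem_top
    obtain ⟨d, hd, s, hs, hds⟩ := Submodule.mem_sup.mp hm
    refine ⟨⟨s, hs⟩, ?_⟩
    rw [hθdef, LinearMap.comp_apply, Submodule.mkQ_apply]
    show Submodule.Quotient.mk s = Submodule.Quotient.mk m
    rw [Submodule.Quotient.eq]
    have : s - m = -d := by rw [← hds]; abel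
    rw [this]
    exact D.neg_mem hd
  set θbar : (↥(Submodule.snd R U U) ⧸ K) →ₗ[R] (U × U) ⧸ D :=
    K.liftQ θ (le_of_eq hθker.symm) with hθbar
  have hθbar_bij : Function.Bijective θbar := by
    constructor
    · rw [← LinearMap.ker_eq_bot]
      exact Submodule.ker_liftQ_eq_bot _ _ _ (le_of_eq hθker)
    · rw [← LinearMap.range_eq_top, hθbar, Submodule.range_liftQ]
      exact LinearMap.range_eq_top.mpr hθsurj
  set ebar := LinearEquiv.ofBijective θbar hθbar_bij with hebar
  set h : ↥(Submodule.fst R U U) →ₗ[R] (↥(Submodule.snd R U U) ⧸ K) :=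
    (ebar.symm : ((U × U) ⧸ D) →ₗ[R] (↥(Submodule.snd R U U) ⧸ K)) ∘ₗ
      D.mkQ ∘ₗ (Submodule.fst R U U).subtype with hhdef
  have hth : ∀ u : ↥(Submodule.fst R U U), θbar (h u) = D.mkQ ↑u := by
    intro u
    have : θbar (h u) = ebar (h u) := rfl
    rw [this, hhdef]
    exact ebar.apply_symm_apply _
  have hPROP : ∀ u, K.liftQ g hKg (h u) = f u := by
    intro u
    obtain ⟨s, hs⟩ := Submodule.Quotient.mk_surjective K (h u)
    have h1 : θbar (h u) = D.mkQ ↑u := hth u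
    rw [← hs] at h1
    have h2 : θbar (Submodule.Quotient.mk s) = D.mkQ ↑s := by
      rw [hθbar, Submodule.liftQ_apply]
      rfl
    rw [h2] at h1
    have h3 : (↑s : U × U) - ↑u ∈ D := by
      rw [← Submodule.Quotient.eq]
      simpa [Submodule.mkQ_apply] using h1
    have h4 : F ↑s = F ↑u := by
      have hmem : (↑s : U × U) - ↑u ∈ N := hDN h3
      rw [hNdef, LinearMap.mem_ker, map_sub] at hmem
      exact sub_eq_zero.mp hmem
    rw [← hs, Submodule.liftQ_apply, ← hFsnd s, h4, hFfst u]
  by_cases hKbot : K = ⊥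
  · left
    set q0 := Submodule.quotEquivOfEqBot K hKbot with hq0
    refine ⟨(q0 : (↥(Submodule.snd R U U) ⧸ K) →ₗ[R] ↥(Submodule.snd R U U)) ∘ₗ h, ?_⟩
    ext u
    obtain ⟨s, hs⟩ := Submodule.Quotient.mk_surjective K (h u)
    have hq0s : q0 (Submodule.Quotient.mk s) = s := Submodule.quotEquivOfEqBot_apply_mk K hKbot s
    have hP := hPROP u
    rw [← hs, Submodule.liftQ_apply] at hP
    rw [LinearMap.comp_apply, LinearMap.comp_apply]
    show f u = g (q0 (h u))
    rw [← hs]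
    show f u = g (q0 (Submodule.Quotient.mk s))
    rw [hq0s, ← hP]
  · by_cases hAbot : D.comap (LinearMap.inl R U U) = ⊥
    · right
      refine ⟨K, hKg, h, ?_, LinearMap.ext hPROP⟩
      intro u1 u2 huv
      have hz : h (u1 - u2) = 0 := by rw [map_sub, huv, sub_self]
      have hmk : D.mkQ ↑(u1 - u2) = 0 := by
        have h1 := hth (u1 - u2)
        rw [hz, map_zero] at h1
        exact h1.symm
      have hmem : (↑(u1 - u2) : U × U) ∈ D := by
        rwa [Submodule.mkQ_apply, Submodule.Quotient.mk_eq_zero] at hmk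
      have h2coord : ((u1 - u2 : ↥(Submodule.fst R U U)) : U × U).2 = 0 :=
        mem_fst''.mp (u1 - u2).2
      have hx : ((u1 - u2 : ↥(Submodule.fst R U U)) : U × U).1 ∈
          D.comap (LinearMap.inl R U U) := by
        rw [Submodule.mem_comap]
        have : LinearMap.inl R U U ((u1 - u2 : ↥(Submodule.fst R U U)) : U × U).1 =
            ((u1 - u2 : ↥(Submodule.fst R U U)) : U × U) := by
          rw [Prod.ext_iff]
          exact ⟨rfl, h2coord.symm⟩
        rw [this]
        exact hmem
      rw [hAbot, Submodule.mem_bot] at hx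
      have hval : ((u1 - u2 : ↥(Submodule.fst R U U)) : U × U) = 0 := by
        rw [Prod.ext_iff]
        exact ⟨hx, h2coord⟩
      have : u1 - u2 = 0 := Subtype.ext hval
      exact sub_eq_zero.mp this
    · left
      have hBbot : D.comap (LinearMap.inr R U U) ≠ ⊥ := by
        intro hb
        apply hKbot
        rw [eq_bot_iff]
        intro v hv
        have hv1 : (v : U × U).1 = 0 := mem_snd''.mp v.2
        have hmem2 : (v : U × U).2 ∈ D.comap (LinearMap.inr R U U) := by
          rw [Submodule.mem_comap]
          have heq : LinearMap.inr R U U (v : U × U).2 = (v : U × U) := by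
            simp [Prod.ext_iff, hv1]
          rw [heq]
          exact hv
        rw [hb, Submodule.mem_bot] at hmem2
        have hval : (v : U × U) = 0 := by
          rw [Prod.ext_iff]
          exact ⟨hv1, hmem2⟩
        exact (Submodule.mem_bot _).mpr (Subtype.ext hval)
      have hCbot : C = ⊥ := by
        by_contra hc
        exact ess_prod hU hAbot hBbot hc (disjoint_iff.mp hC.disjoint)
      have hDtop : D = ⊤ := by
        have hcd := hC.codisjoint
        rw [hCbot, codisjoint_bot] at hcd
        exact hcd
      have hNtop : N = ⊤ := eq_top_iff.mpr (hDtop ▸ hDN)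
      refine ⟨0, ?_⟩
      ext u
      have hFu : F ↑u = 0 := by
        have : (↑u : U × U) ∈ N := hNtop ▸ Submodule.mem_top
        rwa [hNdef, LinearMap.mem_ker] at this
      have : f u = 0 := by rw [← hFfst u, hFu]
      simp [this]

lemma P_of_RHS
    (hRHS : ∀ (X : Type u) [AddCommGroup X] [Module R X]
      (f : ↥(Submodule.fst R U U) →ₗ[R] X) (g : ↥(Submodule.snd R U U) →ₗ[R] X),
      Function.Surjective g →
        (∃ h : ↥(Submodule.fst R U U) →ₗ[R] ↥(Submodule.snd R U U), f = g ∘ₗ h) ∨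
        (∃ (K : Submodule R ↥(Submodule.snd R U U)) (hK : K ≤ LinearMap.ker g)
            (h : ↥(Submodule.fst R U U) →ₗ[R] (↥(Submodule.snd R U U) ⧸ K)),
          Function.Injective h ∧ (K.liftQ g hK) ∘ₗ h = f)) :
    PCond R U := by
  intro X _ _ f g hg
  set ef := Submodule.fstEquiv R U U with hef
  set es := Submodule.sndEquiv R U U with hes
  set f' : ↥(Submodule.fst R U U) →ₗ[R] X := f ∘ₗ (ef : ↥(Submodule.fst R U U) →ₗ[R] U)
    with hf'
  set g' : ↥(Submodule.snd R U U) →ₗ[R] X := g ∘ₗ (es : ↥(Submodule.snd R U U) →ₗ[R] U)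
    with hg'
  have hg's : Function.Surjective g' := by
    intro x
    obtain ⟨u, hu⟩ := hg x
    exact ⟨es.symm u, by simp [hg', hu]⟩
  rcases hRHS X f' g' hg's with ⟨h, hh⟩ | ⟨K, hK, h, hinj, hlift⟩
  · left
    refine ⟨(es : ↥(Submodule.snd R U U) →ₗ[R] U) ∘ₗ h ∘ₗ
      (ef.symm : U →ₗ[R] ↥(Submodule.fst R U U)), ?_⟩
    ext u
    have h1 : f' (ef.symm u) = g' (h (ef.symm u)) := by rw [hh]; rfl
    rw [hf', hg'] at h1
    simp only [LinearMap.comp_apply] at h1 ⊢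
    have h2 : ef (ef.symm u) = u := ef.apply_symm_apply u
    rw [LinearEquiv.coe_coe, LinearEquiv.coe_coe] at h1
    rw [h2] at h1
    exact h1
  · right
    set K' : Submodule R U := K.map (es : ↥(Submodule.snd R U U) →ₗ[R] U) with hK'
    have hK'g : K' ≤ LinearMap.ker g := by
      rintro x ⟨k, hk, rfl⟩
      have := hK hk
      rw [LinearMap.mem_ker] at this ⊢
      rw [hg'] at this
      exact this
    have hmapeq : K.map (es : ↥(Submodule.snd R U U) →ₗ[R] U) = K' := rfl
    set qe : (↥(Submodule.snd R U U) ⧸ K) ≃ₗ[R] (U ⧸ K') :=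
      Submodule.Quotient.equiv K K' es hmapeq with hqe
    refine ⟨K', hK'g, (qe : (↥(Submodule.snd R U U) ⧸ K) →ₗ[R] (U ⧸ K')) ∘ₗ h ∘ₗ
      (ef.symm : U →ₗ[R] ↥(Submodule.fst R U U)), ?_, ?_⟩
    · intro a b hab
      simp only [LinearMap.comp_apply, LinearEquiv.coe_coe] at hab
      have h1 := qe.injective hab
      have h2 := hinj h1
      have h3 := congrArg ef h2
      rwa [ef.apply_symm_apply, ef.apply_symm_apply] at h3
    · ext u
      simp only [LinearMap.comp_apply, LinearEquiv.coe_coe]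
      obtain ⟨s, hs⟩ := Submodule.Quotient.mk_surjective K (h (ef.symm u))
      rw [← hs]
      have hqs : qe (Submodule.Quotient.mk s) = Submodule.Quotient.mk (es s) := by
        rw [hqe]
        rfl
      rw [hqs, Submodule.liftQ_apply]
      have h1 : (K.liftQ g' hK) (h (ef.symm u)) = f' (ef.symm u) := by
        rw [← hlift]; rfl
      rw [← hs, Submodule.liftQ_apply] at h1
      rw [hg'] at h1
      simp only [LinearMap.comp_apply, LinearEquiv.coe_coe] at h1
      rw [h1, hf']
      simp only [LinearMap.comp_apply, LinearEquiv.coe_coe]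
      rw [ef.apply_symm_apply]

end CoreSection


theorem stmt_6 {R : Type*} {U : Type u} [Ring R] [AddCommGroup U] [Module R U]
    (hH : IsHollowModule R U) (hU : IsUniformModule R U) :
    IsLiftingModule R (U × U) ↔
    (∀ (X : Type u) [AddCommGroup X] [Module R X]
      (f : ↥(Submodule.fst R U U) →ₗ[R] X) (g : ↥(Submodule.snd R U U) →ₗ[R] X),
      Function.Surjective g →
        (∃ h : ↥(Submodule.fst R U U) →ₗ[R] ↥(Submodule.snd R U U), f = g ∘ₗ h) ∨
        (∃ (K : Submodule R ↥(Submodule.snd R U U)) (hK : K ≤ LinearMap.ker g)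
            (h : ↥(Submodule.fst R U U) →ₗ[R] (↥(Submodule.snd R U U) ⧸ K)),
          Function.Injective h ∧ (K.liftQ g hK) ∘ₗ h = f)) := by
  constructor
  · intro hL X _ _ f g hg
    exact forward hU hL X f g hg
  · intro hRHS
    exact lifting_of_P hH (P_of_RHS hRHS)
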